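/- In the ambulance-station continuous-time Markov chain with supply vector m, the system of equations ∑_{x ∈ S(m)} ν_x q^m_{x,x'} = 0 for every x' ∈ S(m), together with ∑_{x ∈ S(m)} ν_x = 1, has exactly one solution ν^m = (ν^m_x)_{x ∈ S(m)} ∈ ℝ^{S(m)}, and this solution satisfies ν^m_x > 0 for every x ∈ S(m); that is, the chain has a unique stationary distribution. -/

import Mathlib

/-!
Ambulance-station continuous-time Markov chain.

`C` is the (finite) set of emergency types and `A` the (finite) set of ambulance types.
For each emergency type `c`, `Ac c` is the (nonempty) set of compatible ambulance types,
`lam c > 0` is the arrival rate, and `succ c` is a strict total order on `Ac c`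
(`succ c a a'` meaning `a ≻_c a'`).  For `a ∈ Ac c`, `mu a c > 0` is the service rate.
`m a` is the number of ambulances of type `a` at the station.

A state is encoded as a function `x : A → C → ℕ`, where `x a c` is the number of type-`a`
ambulances busy serving type-`c` emergencies; coordinates `(a, c)` with `a ∉ Ac c` are
required to be `0`.
-/

open Finset

set_option linter.unusedSectionVars false

section CTMCGeneral

variable {n : Type*} [Fintype n] [DecidableEq n] [Nonempty n]

theorem ctmc_stationary (Q : Matrix n n ℝ)
    (hoff : ∀ x y, x ≠ y → 0 ≤ Q x y)
    (hrow : ∀ x, ∑ y, Q x y = 0)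
    (hconn : ∀ x y, Relation.ReflTransGen (fun a b => a ≠ b ∧ 0 < Q a b) x y) :
    ∃ ν : n → ℝ, ((∀ x', ∑ x, ν x * Q x x' = 0) ∧ ∑ x, ν x = 1) ∧ (∀ x, 0 < ν x) ∧
      ∀ ν' : n → ℝ, ((∀ x', ∑ x, ν' x * Q x x' = 0) ∧ ∑ x, ν' x = 1) → ν' = ν := by
  classical
  have hsumneg : ∀ (f : n → ℝ), (∀ x, f x < 0) → ∑ x, f x < 0 := by
    intro f hf
    have h : 0 < ∑ x, -f x := Finset.sum_pos (fun x _ => by linarith [hf x]) univ_nonempty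
    have h2 : ∑ x, -f x = -∑ x, f x := by simp
    linarith [h2 ▸ h]
  -- diagonal entries are nonpositive
  have hdiagle : ∀ x, Q x x ≤ 0 := by
    intro x
    have h1 : Q x x + ∑ y ∈ univ.erase x, Q x y = 0 := by
      rw [Finset.add_sum_erase univ (Q x) (mem_univ x)]; exact hrow x
    have h2 : 0 ≤ ∑ y ∈ univ.erase x, Q x y :=
      Finset.sum_nonneg fun y hy => hoff x y (Ne.symm (Finset.ne_of_mem_erase hy))
    linarith
  set Λ : ℝ := 1 + ∑ x, (-Q x x) with hΛdef
  have hΛpos : ∀ x, 0 < Λ + Q x x := by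
    intro x
    have h1 : -Q x x ≤ ∑ y, (-Q y y) :=
      Finset.single_le_sum (fun y _ => neg_nonneg.2 (hdiagle y)) (mem_univ x)
    simp only [hΛdef]; linarith
  set P : n → n → ℝ := fun x y => (if x = y then Λ else 0) + Q x y with hPdef
  have hPnonneg : ∀ x y, 0 ≤ P x y := by
    intro x y
    by_cases h : x = y
    · subst h; simp only [hPdef, if_pos rfl, ite_true, eq_self_iff_true]
      linarith [hΛpos x]
    · simp only [hPdef, if_neg h, zero_add]; exact hoff x y h
  have hProw : ∀ x, ∑ y, P x y = Λ := by
    intro x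
    simp only [hPdef]
    rw [Finset.sum_add_distrib, hrow, Finset.sum_ite_eq univ x (fun _ => Λ)]
    simp
  -- kernel predicate
  set ker : (n → ℝ) → Prop := fun ξ => ∀ x', ∑ x, ξ x * Q x x' = 0 with hkerdef
  have hkerP : ∀ ξ, ker ξ → ∀ x', ∑ x, ξ x * P x x' = Λ * ξ x' := by
    intro ξ hξ x'
    simp only [hPdef, mul_add]
    rw [Finset.sum_add_distrib, hξ x', add_zero]
    have : ∀ x, ξ x * (if x = x' then Λ else 0) = if x = x' then ξ x' * Λ else 0 := by
      intro x; by_cases h : x = x' <;> simp [h]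
    rw [Finset.sum_congr rfl fun x _ => this x, Finset.sum_ite_eq' univ x' (fun _ => ξ x' * Λ)]
    simp [mul_comm]
  have hPker : ∀ ξ, (∀ x', ∑ x, ξ x * P x x' = Λ * ξ x') → ker ξ := by
    intro ξ hξ x'
    have h := hξ x'
    simp only [hPdef, mul_add] at h
    rw [Finset.sum_add_distrib] at h
    have h2 : ∀ x, ξ x * (if x = x' then Λ else 0) = if x = x' then ξ x' * Λ else 0 := by
      intro x; by_cases h : x = x' <;> simp [h]
    rw [Finset.sum_congr rfl fun x _ => h2 x,
      Finset.sum_ite_eq' univ x' (fun _ => ξ x' * Λ)] at h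
    simp only [mem_univ, if_pos] at h
    linarith [h]
  -- |ξ| is in the kernel
  have habs : ∀ ξ, ker ξ → ker (fun x => |ξ x|) := by
    intro ξ hξ
    apply hPker
    have hle : ∀ x', Λ * |ξ x'| ≤ ∑ x, |ξ x| * P x x' := by
      intro x'
      have h1 : Λ * |ξ x'| = |∑ x, ξ x * P x x'| := by
        rw [hkerP ξ hξ x', abs_mul]
        congr 1
        exact (abs_of_pos (by linarith [hΛpos (Classical.arbitrary n), hdiagle (Classical.arbitrary n)] : (0:ℝ) < Λ)).symm
      rw [h1]
      calc |∑ x, ξ x * P x x'| ≤ ∑ x, |ξ x * P x x'| := Finset.abs_sum_le_sum_abs _ _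
        _ = ∑ x, |ξ x| * P x x' := by
            apply Finset.sum_congr rfl; intro x _
            rw [abs_mul, abs_of_nonneg (hPnonneg x x')]
    have hsum : ∑ x', (∑ x, |ξ x| * P x x') = ∑ x', Λ * |ξ x'| := by
      rw [Finset.sum_comm]
      simp only [← Finset.mul_sum, hProw]
      simp [mul_comm, Finset.sum_mul]
    intro x'
    have := (Finset.sum_eq_sum_iff_of_le (fun i _ => hle i)).1 hsum.symm x' (mem_univ x')
    linarith [this]
  -- positivity propagation for nonnegative kernel elements
  have hposprop : ∀ ξ, ker ξ → (∀ x, 0 ≤ ξ x) → ξ ≠ 0 → ∀ x, 0 < ξ x := by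
    intro ξ hξ hnn hne x
    rcases lt_or_eq_of_le (hnn x) with h | h
    · exact h
    -- ξ x = 0; propagate backwards
    exfalso
    obtain ⟨x₀, hx₀⟩ : ∃ x₀, ξ x₀ ≠ 0 := by
      by_contra h'
      push_neg at h'
      exact hne (funext h')
    have hzero : ∀ a b, Relation.ReflTransGen (fun a b => a ≠ b ∧ 0 < Q a b) a b →
        ξ b = 0 → ξ a = 0 := by
      intro a b hab
      induction hab with
      | refl => exact id
      | @tail b c hab' hstep ih =>
        intro hc
        apply ih
        have hP : ∑ z, ξ z * P z c = 0 := by rw [hkerP ξ hξ c, hc, mul_zero]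
        have hterm : ∀ z ∈ univ, ξ z * P z c = 0 :=
          (Finset.sum_eq_zero_iff_of_nonneg
            (fun z _ => mul_nonneg (hnn z) (hPnonneg z c))).1 hP
        have hb := hterm b (mem_univ b)
        have hPpos : 0 < P b c := by
          simp only [hPdef, if_neg hstep.1, zero_add]; exact hstep.2
        rcases mul_eq_zero.1 hb with h' | h'
        · exact h'
        · exact absurd h' (ne_of_gt hPpos)
    exact hx₀ (hzero x₀ x (hconn x₀ x) h.symm)
  -- sign lemma
  have hsign : ∀ ξ, ker ξ → ξ ≠ 0 → (∀ x, 0 < ξ x) ∨ (∀ x, ξ x < 0) := by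
    intro ξ hξ hne
    have habsk := habs ξ hξ
    have habsne : (fun x => |ξ x|) ≠ 0 := by
      intro h
      apply hne
      funext x
      have := congrFun h x
      simpa using abs_eq_zero.1 this
    have habspos : ∀ x, 0 < |ξ x| := hposprop _ habsk (fun x => abs_nonneg _) habsne
    set u : n → ℝ := fun x => |ξ x| - ξ x with hudef
    have huker : ker u := by
      intro x'
      simp only [hudef, sub_mul]
      rw [Finset.sum_sub_distrib, habsk x', hξ x', sub_zero]
    have hunn : ∀ x, 0 ≤ u x := fun x => by simp [hudef, le_abs_self]
    by_cases hu : u = 0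
    · left
      intro x
      have := congrFun hu x
      simp only [hudef, Pi.zero_apply, sub_eq_zero] at this
      rw [← this]; exact habspos x
    · right
      intro x
      have := hposprop u huker hunn hu x
      simp only [hudef, sub_pos] at this
      rcases abs_cases (ξ x) with ⟨h1, h2⟩ | ⟨h1, h2⟩
      · rw [h1] at this; linarith
      · linarith
  -- existence of a nonzero kernel element
  obtain ⟨ξ₀, hξ₀ne, hξ₀⟩ : ∃ ξ₀, ξ₀ ≠ 0 ∧ ker ξ₀ := by
    have hdet : Q.det = 0 := by
      rw [← Matrix.exists_mulVec_eq_zero_iff]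
      refine ⟨fun _ => 1, ?_, ?_⟩
      · intro h
        have := congrFun h (Classical.arbitrary n)
        simp at this
      · funext x
        simp [Matrix.mulVec, dotProduct, hrow x]
    have hdetT : Q.transpose.det = 0 := by rw [Matrix.det_transpose]; exact hdet
    obtain ⟨v, hv, hQv⟩ := Matrix.exists_mulVec_eq_zero_iff.2 hdetT
    refine ⟨v, hv, ?_⟩
    intro x'
    have := congrFun hQv x'
    simp only [Matrix.mulVec, dotProduct, Matrix.transpose_apply, Pi.zero_apply] at this
    rw [← this]
    apply Finset.sum_congr rfl
    intro x _; rw [mul_comm]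
  -- normalize
  have hsign₀ := hsign ξ₀ hξ₀ hξ₀ne
  set s : ℝ := ∑ x, ξ₀ x with hsdef
  have hsne : s ≠ 0 := by
    rcases hsign₀ with h | h
    · exact ne_of_gt (Finset.sum_pos (fun x _ => h x) univ_nonempty)
    · exact ne_of_lt (hsumneg _ h)
  set ν : n → ℝ := fun x => s⁻¹ * ξ₀ x with hνdef
  have hνker : ker ν := by
    intro x'
    simp only [hνdef, mul_assoc, ← Finset.mul_sum, hξ₀ x', mul_zero]
  have hνsum : ∑ x, ν x = 1 := by
    simp only [hνdef, ← Finset.mul_sum, ← hsdef]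
    exact inv_mul_cancel₀ hsne
  have hνpos : ∀ x, 0 < ν x := by
    intro x
    rcases hsign₀ with h | h
    · have hs : 0 < s := Finset.sum_pos (fun x _ => h x) univ_nonempty
      exact mul_pos (inv_pos.2 hs) (h x)
    · have hs : s < 0 := hsumneg _ h
      exact mul_pos_of_neg_of_neg (inv_neg''.2 hs) (h x)
  refine ⟨ν, ⟨hνker, hνsum⟩, hνpos, ?_⟩
  rintro ν' ⟨hν'ker, hν'sum⟩
  set w : n → ℝ := fun x => ν' x - ν x with hwdef
  have hwker : ker w := by
    intro x'
    simp only [hwdef, sub_mul]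
    rw [Finset.sum_sub_distrib, hν'ker x', hνker x', sub_zero]
  have hwsum : ∑ x, w x = 0 := by
    simp only [hwdef]
    rw [Finset.sum_sub_distrib, hν'sum, hνsum, sub_self]
  by_cases hw : w = 0
  · funext x
    have := congrFun hw x
    simp only [hwdef, Pi.zero_apply, sub_eq_zero] at this
    exact this
  · exfalso
    rcases hsign w hwker hw with h | h
    · exact absurd hwsum (ne_of_gt (Finset.sum_pos (fun x _ => h x) univ_nonempty))
    · exact absurd hwsum (ne_of_lt (hsumneg _ h))

end CTMCGeneral

section Ambulance

open scoped Classical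

variable {C A : Type*} [Fintype C] [Fintype A] [DecidableEq C] [DecidableEq A]

/-- The number of busy type-`a` ambulances in state `x`: `∑_{c' ∈ C(a)} x_{a,c'}`,
where `C(a) = {c : a ∈ Ac c}`. -/
def busy (Ac : C → Finset A) (x : A → C → ℕ) (a : A) : ℕ :=
  ∑ c ∈ Finset.univ.filter (fun c => a ∈ Ac c), x a c

/-- The state space `S(m)`: integer vectors `x = (x_{a,c})_{a ∈ A, c ∈ C(a)}` with
`x_{a,c} ≥ 0` and `∑_{c ∈ C(a)} x_{a,c} ≤ m a` for every `a`. -/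
noncomputable def stateSpace (Ac : C → Finset A) (m : A → ℕ) : Finset (A → C → ℕ) :=
  (Fintype.piFinset fun a => Fintype.piFinset fun _ => Finset.range (m a + 1)).filter
    (fun x => (∀ a c, a ∉ Ac c → x a c = 0) ∧ ∀ a, busy Ac x a ≤ m a)

/-- `a` is the `≻_c`-greatest ambulance type that is compatible with `c` and has an
available ambulance in state `x`. -/
def IsPreferred (Ac : C → Finset A) (succ : C → A → A → Prop) (m : A → ℕ)
    (x : A → C → ℕ) (c : C) (a : A) : Prop :=
  a ∈ Ac c ∧ busy Ac x a < m a ∧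
    ∀ a' ∈ Ac c, busy Ac x a' < m a' → a' ≠ a → succ c a a'

/-- `x + e_{a,c}`. -/
def incr (x : A → C → ℕ) (a : A) (c : C) : A → C → ℕ :=
  fun a' c' => if a' = a ∧ c' = c then x a c + 1 else x a' c'

/-- `x − e_{a,c}`. -/
def decr (x : A → C → ℕ) (a : A) (c : C) : A → C → ℕ :=
  fun a' c' => if a' = a ∧ c' = c then x a c - 1 else x a' c'

/-- The off-diagonal transition rates of the chain: rate `lam c` from `x` to `x + e_{â,c}`
where `â` is the `≻_c`-greatest compatible ambulance type with an available ambulance,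
rate `mu a c * x a c` from `x` to `x − e_{a,c}` whenever `x a c > 0`, and `0` otherwise. -/
noncomputable def offRate (Ac : C → Finset A) (lam : C → ℝ) (succ : C → A → A → Prop)
    (mu : A → C → ℝ) (m : A → ℕ) (x x' : A → C → ℕ) : ℝ :=
  (∑ c : C, if ∃ a, IsPreferred Ac succ m x c a ∧ x' = incr x a c then lam c else 0) +
    ∑ a : A, ∑ c : C,
      if a ∈ Ac c ∧ 0 < x a c ∧ x' = decr x a c then mu a c * (x a c : ℝ) else 0

/-- The full transition rate matrix `q^m`, with diagonal entries
`q^m_{x,x} = −∑_{x' ≠ x} q^m_{x,x'}`. -/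
noncomputable def qrate (Ac : C → Finset A) (lam : C → ℝ) (succ : C → A → A → Prop)
    (mu : A → C → ℝ) (m : A → ℕ) (x x' : A → C → ℕ) : ℝ :=
  if x' = x then -(∑ y ∈ (stateSpace Ac m).erase x, offRate Ac lam succ mu m x y)
  else offRate Ac lam succ mu m x x'

----------------------------------------------------------------
-- auxiliary lemmas
----------------------------------------------------------------

variable {Ac : C → Finset A} {m : A → ℕ}

lemma le_busy {x : A → C → ℕ} {a : A} {c : C} (h : a ∈ Ac c) : x a c ≤ busy Ac x a :=
  Finset.single_le_sum (f := fun c' => x a c') (fun _ _ => Nat.zero_le _)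
    (by simp [h])

lemma busy_mono {x y : A → C → ℕ} (h : ∀ a c, x a c ≤ y a c) (a : A) :
    busy Ac x a ≤ busy Ac y a :=
  Finset.sum_le_sum fun c _ => h a c

lemma busy_congr_row {x y : A → C → ℕ} {a : A} (h : ∀ c, x a c = y a c) :
    busy Ac x a = busy Ac y a :=
  Finset.sum_congr rfl fun c _ => h c

lemma mem_stateSpace_iff {x : A → C → ℕ} :
    x ∈ stateSpace Ac m ↔ (∀ a c, a ∉ Ac c → x a c = 0) ∧ ∀ a, busy Ac x a ≤ m a := by
  unfold stateSpace
  rw [Finset.mem_filter]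
  constructor
  · rintro ⟨-, h⟩; exact h
  · intro h
    refine ⟨?_, h⟩
    rw [Fintype.mem_piFinset]
    intro a
    rw [Fintype.mem_piFinset]
    intro c
    rw [Finset.mem_range, Nat.lt_succ_iff]
    by_cases hac : a ∈ Ac c
    · exact le_trans (le_busy hac) (h.2 a)
    · rw [h.1 a c hac]; exact Nat.zero_le _

lemma mem_of_le {x y : A → C → ℕ} (hy : y ∈ stateSpace Ac m)
    (h : ∀ a c, x a c ≤ y a c) : x ∈ stateSpace Ac m := by
  rw [mem_stateSpace_iff] at hy ⊢
  constructor
  · intro a c hac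
    have := hy.1 a c hac
    have := h a c
    omega
  · intro a
    exact le_trans (busy_mono h a) (hy.2 a)

lemma zero_mem : (fun _ _ => 0 : A → C → ℕ) ∈ stateSpace Ac m := by
  rw [mem_stateSpace_iff]
  refine ⟨fun _ _ _ => rfl, fun a => ?_⟩
  simp [busy]

lemma le_incr (x : A → C → ℕ) (a : A) (c : C) (a' : A) (c' : C) :
    x a' c' ≤ incr x a c a' c' := by
  unfold incr
  by_cases h : a' = a ∧ c' = c
  · obtain ⟨rfl, rfl⟩ := h; simp
  · rw [if_neg h]

lemma decr_le (x : A → C → ℕ) (a : A) (c : C) (a' : A) (c' : C) :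
    decr x a c a' c' ≤ x a' c' := by
  unfold decr
  by_cases h : a' = a ∧ c' = c
  · obtain ⟨rfl, rfl⟩ := h; simp
  · rw [if_neg h]

lemma busy_incr_self {x : A → C → ℕ} {a : A} {c : C} (hc : a ∈ Ac c) :
    busy Ac (incr x a c) a = busy Ac x a + 1 := by
  unfold busy
  have h : ∀ c' ∈ Finset.univ.filter (fun c' => a ∈ Ac c'),
      incr x a c a c' = x a c' + (if c' = c then 1 else 0) := by
    intro c' _
    by_cases h : c' = c
    · subst h; simp [incr]
    · simp [incr, h]
  rw [Finset.sum_congr rfl h, Finset.sum_add_distrib,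
    Finset.sum_ite_eq' _ c (fun _ => 1), if_pos (by simp [hc])]

lemma busy_incr_ne {x : A → C → ℕ} {a a' : A} {c : C} (h : a' ≠ a) :
    busy Ac (incr x a c) a' = busy Ac x a' :=
  busy_congr_row fun c' => by simp [incr, h]

lemma busy_decr_self {x : A → C → ℕ} {a : A} {c : C} (hc : a ∈ Ac c)
    (hpos : 0 < x a c) : busy Ac (decr x a c) a + 1 = busy Ac x a := by
  unfold busy
  have h : ∀ c' ∈ Finset.univ.filter (fun c' => a ∈ Ac c'),
      x a c' = decr x a c a c' + (if c' = c then 1 else 0) := by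
    intro c' _
    by_cases h : c' = c
    · subst h; simp [decr]; omega
    · simp [decr, h]
  rw [Finset.sum_congr rfl h, Finset.sum_add_distrib,
    Finset.sum_ite_eq' _ c (fun _ => 1), if_pos (by simp [hc])]

lemma busy_decr_ne {x : A → C → ℕ} {a a' : A} {c : C} (h : a' ≠ a) :
    busy Ac (decr x a c) a' = busy Ac x a' :=
  busy_congr_row fun c' => by simp [decr, h]

lemma incr_mem {x : A → C → ℕ} {a : A} {c : C} (hx : x ∈ stateSpace Ac m)
    (hc : a ∈ Ac c) (hb : busy Ac x a < m a) : incr x a c ∈ stateSpace Ac m := by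
  rw [mem_stateSpace_iff] at hx ⊢
  constructor
  · intro a' c' h'
    by_cases h : a' = a ∧ c' = c
    · obtain ⟨rfl, rfl⟩ := h; exact absurd hc h'
    · rw [show incr x a c a' c' = x a' c' by simp [incr, h]]
      exact hx.1 a' c' h'
  · intro a'
    by_cases h : a' = a
    · subst h; rw [busy_incr_self hc]; omega
    · rw [busy_incr_ne h]; exact hx.2 a'

lemma decr_mem {x : A → C → ℕ} {a : A} {c : C} (hx : x ∈ stateSpace Ac m) :
    decr x a c ∈ stateSpace Ac m :=
  mem_of_le hx (fun a' c' => decr_le x a c a' c')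

lemma incr_ne (x : A → C → ℕ) (a : A) (c : C) : incr x a c ≠ x := by
  intro h
  have := congrFun (congrFun h a) c
  simp [incr] at this

lemma decr_ne {x : A → C → ℕ} {a : A} {c : C} (hpos : 0 < x a c) : decr x a c ≠ x := by
  intro h
  have := congrFun (congrFun h a) c
  simp [decr] at this
  omega

lemma total_decr {x : A → C → ℕ} {a : A} {c : C} (hpos : 0 < x a c) :
    (∑ a' : A, ∑ c' : C, decr x a c a' c') + 1 = ∑ a' : A, ∑ c' : C, x a' c' := by
  have h : ∀ a' c', x a' c' = decr x a c a' c' + (if a' = a ∧ c' = c then 1 else 0) := by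
    intro a' c'
    by_cases h : a' = a ∧ c' = c
    · obtain ⟨rfl, rfl⟩ := h; simp [decr]; omega
    · simp [decr, h]
  conv_rhs => rw [show (fun a' => ∑ c' : C, x a' c') = fun a' =>
    ∑ c' : C, (decr x a c a' c' + (if a' = a ∧ c' = c then 1 else 0)) by
      funext a'; exact Finset.sum_congr rfl fun c' _ => h a' c']
  rw [show (∑ a' : A, ∑ c' : C, (decr x a c a' c' +
      (if a' = a ∧ c' = c then 1 else 0))) =
      (∑ a' : A, ∑ c' : C, decr x a c a' c') +
      ∑ a' : A, ∑ c' : C, (if a' = a ∧ c' = c then 1 else 0) by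
    rw [← Finset.sum_add_distrib]
    exact Finset.sum_congr rfl fun a' _ => Finset.sum_add_distrib]
  congr 1
  have : ∀ a' : A, (∑ c' : C, (if a' = a ∧ c' = c then (1:ℕ) else 0)) =
      if a' = a then 1 else 0 := by
    intro a'
    by_cases h : a' = a
    · subst h; simp
    · simp [h]
  rw [Finset.sum_congr rfl fun a' _ => this a',
    Finset.sum_ite_eq' _ a (fun _ => 1), if_pos (mem_univ a)]


----------------------------------------------------------------
-- rates
----------------------------------------------------------------

variable {lam : C → ℝ} {succ : C → A → A → Prop} {mu : A → C → ℝ}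

lemma offRate_nonneg (hlam : ∀ c, 0 < lam c) (hmu : ∀ a c, a ∈ Ac c → 0 < mu a c)
    (x x' : A → C → ℕ) : 0 ≤ offRate Ac lam succ mu m x x' := by
  apply add_nonneg
  · apply Finset.sum_nonneg
    intro c _
    split_ifs
    · exact le_of_lt (hlam c)
    · exact le_refl 0
  · apply Finset.sum_nonneg
    intro a _
    apply Finset.sum_nonneg
    intro c _
    split_ifs with h
    · exact mul_nonneg (le_of_lt (hmu a c h.1)) (Nat.cast_nonneg _)
    · exact le_refl 0

lemma offRate_incr_pos (hlam : ∀ c, 0 < lam c) (hmu : ∀ a c, a ∈ Ac c → 0 < mu a c)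
    {x : A → C → ℕ} {a : A} {c : C}
    (hpref : IsPreferred Ac succ m x c a) :
    0 < offRate Ac lam succ mu m x (incr x a c) := by
  unfold offRate
  have h1 : (lam c : ℝ) ≤
      ∑ c' : C, if ∃ a', IsPreferred Ac succ m x c' a' ∧ incr x a c = incr x a' c'
        then lam c' else 0 := by
    have hterm : (if ∃ a', IsPreferred Ac succ m x c a' ∧ incr x a c = incr x a' c
        then lam c else 0) = lam c := if_pos ⟨a, hpref, rfl⟩
    calc (lam c : ℝ) = _ := hterm.symm
      _ ≤ _ := Finset.single_le_sum (f := fun c' =>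
          if ∃ a', IsPreferred Ac succ m x c' a' ∧ incr x a c = incr x a' c'
          then lam c' else 0)
          (fun c' _ => by split_ifs; exacts [le_of_lt (hlam c'), le_refl 0])
          (mem_univ c)
  have h2 : (0:ℝ) ≤ ∑ a' : A, ∑ c' : C,
      if a' ∈ Ac c' ∧ 0 < x a' c' ∧ incr x a c = decr x a' c'
      then mu a' c' * (x a' c' : ℝ) else 0 := by
    apply Finset.sum_nonneg; intro a' _
    apply Finset.sum_nonneg; intro c' _
    split_ifs with h
    · exact mul_nonneg (le_of_lt (hmu a' c' h.1)) (Nat.cast_nonneg _)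
    · exact le_refl 0
  linarith [hlam c]

lemma offRate_decr_pos (hlam : ∀ c, 0 < lam c) (hmu : ∀ a c, a ∈ Ac c → 0 < mu a c)
    {x : A → C → ℕ} {a : A} {c : C} (hc : a ∈ Ac c) (hpos : 0 < x a c) :
    0 < offRate Ac lam succ mu m x (decr x a c) := by
  unfold offRate
  have h1 : (0:ℝ) ≤ ∑ c' : C,
      if ∃ a', IsPreferred Ac succ m x c' a' ∧ decr x a c = incr x a' c'
      then lam c' else 0 := by
    apply Finset.sum_nonneg; intro c' _
    split_ifs; exacts [le_of_lt (hlam c'), le_refl 0]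
  have h2 : mu a c * (x a c : ℝ) ≤ ∑ a' : A, ∑ c' : C,
      if a' ∈ Ac c' ∧ 0 < x a' c' ∧ decr x a c = decr x a' c'
      then mu a' c' * (x a' c' : ℝ) else 0 := by
    have hinner : ∀ a' : A, (0:ℝ) ≤ ∑ c' : C,
        if a' ∈ Ac c' ∧ 0 < x a' c' ∧ decr x a c = decr x a' c'
        then mu a' c' * (x a' c' : ℝ) else 0 := by
      intro a'
      apply Finset.sum_nonneg; intro c' _
      split_ifs with h
      · exact mul_nonneg (le_of_lt (hmu a' c' h.1)) (Nat.cast_nonneg _)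
      · exact le_refl 0
    have hterm : mu a c * (x a c : ℝ) ≤ ∑ c' : C,
        if a ∈ Ac c' ∧ 0 < x a c' ∧ decr x a c = decr x a c'
        then mu a c' * (x a c' : ℝ) else 0 := by
      have : (if a ∈ Ac c ∧ 0 < x a c ∧ decr x a c = decr x a c
          then mu a c * (x a c : ℝ) else 0) = mu a c * (x a c : ℝ) :=
        if_pos ⟨hc, hpos, rfl⟩
      calc mu a c * (x a c : ℝ) = _ := this.symm
        _ ≤ _ := Finset.single_le_sum (f := fun c' =>
            if a ∈ Ac c' ∧ 0 < x a c' ∧ decr x a c = decr x a c'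
            then mu a c' * (x a c' : ℝ) else 0)
            (fun c' _ => by
              split_ifs with h
              · exact mul_nonneg (le_of_lt (hmu a c' h.1)) (Nat.cast_nonneg _)
              · exact le_refl 0)
            (mem_univ c)
    calc mu a c * (x a c : ℝ) ≤ _ := hterm
      _ ≤ _ := Finset.single_le_sum (f := fun a' => ∑ c' : C,
          if a' ∈ Ac c' ∧ 0 < x a' c' ∧ decr x a c = decr x a' c'
          then mu a' c' * (x a' c' : ℝ) else 0)
          (fun a' _ => hinner a') (mem_univ a)
  have h3 : 0 < mu a c * (x a c : ℝ) :=
    mul_pos (hmu a c hc) (by exact_mod_cast hpos)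
  linarith

lemma qrate_off {x x' : A → C → ℕ} (h : x' ≠ x) :
    qrate Ac lam succ mu m x x' = offRate Ac lam succ mu m x x' := if_neg h


----------------------------------------------------------------
-- reachability
----------------------------------------------------------------

lemma exists_max {r : A → A → Prop} :
    ∀ (k : ℕ) (s : Finset A), s.card ≤ k → s.Nonempty →
      (∀ a ∈ s, ¬ r a a) →
      (∀ a ∈ s, ∀ b ∈ s, ∀ d ∈ s, r a b → r b d → r a d) →
      ∃ a ∈ s, ∀ b ∈ s, ¬ r b a := by
  intro k
  induction k with
  | zero =>
    intro s hcard hs _ _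
    obtain ⟨a, ha⟩ := hs
    have := Finset.card_pos.2 ⟨a, ha⟩
    omega
  | succ k ih =>
    intro s hcard hs hirr htr
    obtain ⟨a, ha⟩ := hs
    by_cases h' : (s.filter (fun b => r b a)).Nonempty
    · have hsub : s.filter (fun b => r b a) ⊆ s := Finset.filter_subset _ _
      have hans' : a ∉ s.filter (fun b => r b a) :=
        fun h => hirr a ha (Finset.mem_filter.1 h).2
      have hlt : (s.filter (fun b => r b a)).card < s.card :=
        Finset.card_lt_card ⟨hsub, fun hcontra => hans' (hcontra ha)⟩
      obtain ⟨amax, hamax, hmax⟩ := ih (s.filter (fun b => r b a)) (by omega) h'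
        (fun b hb => hirr b (hsub hb))
        (fun a₁ h₁ a₂ h₂ a₃ h₃ => htr a₁ (hsub h₁) a₂ (hsub h₂) a₃ (hsub h₃))
      refine ⟨amax, hsub hamax, fun b hb hr => ?_⟩
      have hra : r amax a := (Finset.mem_filter.1 hamax).2
      have hba : r b a := htr b hb amax (hsub hamax) a ha hr hra
      exact hmax b (Finset.mem_filter.2 ⟨hb, hba⟩) hr
    · exact ⟨a, ha, fun b hb hr => h' ⟨b, Finset.mem_filter.2 ⟨hb, hr⟩⟩⟩

/-- One-step transition relation on the state space. -/
def Stp (Ac : C → Finset A) (lam : C → ℝ) (succ : C → A → A → Prop)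
    (mu : A → C → ℝ) (m : A → ℕ)
    (x y : {x // x ∈ stateSpace Ac m}) : Prop :=
  x ≠ y ∧ 0 < qrate Ac lam succ mu m x.1 y.1

lemma stp_incr (hlam : ∀ c, 0 < lam c) (hmu : ∀ a c, a ∈ Ac c → 0 < mu a c)
    {x : {x // x ∈ stateSpace Ac m}} {a : A} {c : C}
    (hpref : IsPreferred Ac succ m x.1 c a) :
    Stp Ac lam succ mu m x ⟨incr x.1 a c, incr_mem x.2 hpref.1 hpref.2.1⟩ := by
  constructor
  · intro h
    exact incr_ne x.1 a c (congrArg Subtype.val h).symm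
  · rw [qrate_off (incr_ne x.1 a c)]
    exact offRate_incr_pos hlam hmu hpref

lemma stp_decr (hlam : ∀ c, 0 < lam c) (hmu : ∀ a c, a ∈ Ac c → 0 < mu a c)
    {x : {x // x ∈ stateSpace Ac m}} {a : A} {c : C}
    (hc : a ∈ Ac c) (hpos : 0 < x.1 a c) :
    Stp Ac lam succ mu m x ⟨decr x.1 a c, decr_mem x.2⟩ := by
  constructor
  · intro h
    exact decr_ne hpos (congrArg Subtype.val h).symm
  · rw [qrate_off (decr_ne hpos)]
    exact offRate_decr_pos hlam hmu hc hpos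

lemma reach_down (hlam : ∀ c, 0 < lam c) (hmu : ∀ a c, a ∈ Ac c → 0 < mu a c) :
    ∀ (k : ℕ) (x z : {x // x ∈ stateSpace Ac m}),
      (∑ a : A, ∑ c : C, x.1 a c) ≤ k → (∀ a c, z.1 a c ≤ x.1 a c) →
      Relation.ReflTransGen (Stp Ac lam succ mu m) x z := by
  intro k
  induction k with
  | zero =>
    intro x z htot hle
    have hx0 : ∀ a c, x.1 a c = 0 := by
      intro a c
      have h0 : (∑ a : A, ∑ c : C, x.1 a c) = 0 := Nat.le_zero.1 htot
      have h1 := Finset.sum_eq_zero_iff.1 h0 a (mem_univ a)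
      exact Finset.sum_eq_zero_iff.1 h1 c (mem_univ c)
    have hxz : x = z := Subtype.ext (funext fun a => funext fun c => by
      have h1 := hle a c; have h2 := hx0 a c; omega)
    rw [hxz]
  | succ k ih =>
    intro x z htot hle
    by_cases hxz : x = z
    · rw [hxz]
    · obtain ⟨a, c, hne⟩ : ∃ a c, z.1 a c ≠ x.1 a c := by
        by_contra hcon
        push_neg at hcon
        exact hxz (Subtype.ext (funext fun a => funext fun c => (hcon a c).symm))
      have hlt : z.1 a c < x.1 a c := lt_of_le_of_ne (hle a c) hne
      have hpos : 0 < x.1 a c := by omega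
      have hac : a ∈ Ac c := by
        by_contra hnot
        have := (mem_stateSpace_iff.1 x.2).1 a c hnot
        omega
      have hstep := stp_decr (succ := succ) hlam hmu hac hpos (x := x)
      have htot' :
          (∑ a' : A, ∑ c' : C, decr x.1 a c a' c') ≤ k := by
        have := total_decr (x := x.1) (a := a) (c := c) hpos
        omega
      have hle' : ∀ a' c', z.1 a' c' ≤ decr x.1 a c a' c' := by
        intro a' c'
        by_cases h : a' = a ∧ c' = c
        · rw [h.1, h.2, show decr x.1 a c a c = x.1 a c - 1 from by simp [decr]]
          omega
        · rw [show decr x.1 a c a' c' = x.1 a' c' from by simp [decr, h]]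
          exact hle a' c'
      exact Relation.ReflTransGen.head hstep
        (ih ⟨decr x.1 a c, decr_mem x.2⟩ z htot' hle')

lemma fill_direct (hlam : ∀ c, 0 < lam c) (hmu : ∀ a c, a ∈ Ac c → 0 < mu a c) :
    ∀ (j : ℕ) (x : {x // x ∈ stateSpace Ac m}) (c : C) (a : A), a ∈ Ac c →
      (∀ a' ∈ Ac c, busy Ac x.1 a' < m a' → a' ≠ a → succ c a a') →
      m a - busy Ac x.1 a ≤ j →
      ∃ y : {x // x ∈ stateSpace Ac m},
        Relation.ReflTransGen (Stp Ac lam succ mu m) x y ∧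
        (∀ a' c', x.1 a' c' ≤ y.1 a' c') ∧ busy Ac y.1 a = m a := by
  intro j
  induction j with
  | zero =>
    intro x c a hc hpref3 hj
    have hle := (mem_stateSpace_iff.1 x.2).2 a
    have hfull : busy Ac x.1 a = m a := by omega
    exact ⟨x, Relation.ReflTransGen.refl, fun _ _ => le_refl _, hfull⟩
  | succ j ih =>
    intro x c a hc hpref3 hj
    by_cases hfull : busy Ac x.1 a = m a
    · exact ⟨x, Relation.ReflTransGen.refl, fun _ _ => le_refl _, hfull⟩
    · have hblt : busy Ac x.1 a < m a :=
        lt_of_le_of_ne ((mem_stateSpace_iff.1 x.2).2 a) hfull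
      have hpref : IsPreferred Ac succ m x.1 c a := ⟨hc, hblt, hpref3⟩
      have hstep := stp_incr hlam hmu hpref (x := x)
      have hb' : busy Ac (incr x.1 a c) a = busy Ac x.1 a + 1 := busy_incr_self hc
      have hpref3' : ∀ a' ∈ Ac c, busy Ac (incr x.1 a c) a' < m a' → a' ≠ a →
          succ c a a' := by
        intro a' ha' hba' hne
        rw [busy_incr_ne hne] at hba'
        exact hpref3 a' ha' hba' hne
      obtain ⟨y, hreach, hmono, hfull'⟩ :=
        ih ⟨incr x.1 a c, incr_mem x.2 hc hblt⟩ c a hc hpref3' (by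
          show m a - busy Ac (incr x.1 a c) a ≤ j
          omega)
      exact ⟨y, Relation.ReflTransGen.head hstep hreach,
        fun a' c' => le_trans (le_incr x.1 a c a' c') (hmono a' c'), hfull'⟩

lemma saturate (hlam : ∀ c, 0 < lam c) (hmu : ∀ a c, a ∈ Ac c → 0 < mu a c)
    (hirr : ∀ c, ∀ a ∈ Ac c, ¬ succ c a a)
    (htrans : ∀ c, ∀ a ∈ Ac c, ∀ b ∈ Ac c, ∀ d ∈ Ac c,
      succ c a b → succ c b d → succ c a d)
    (htotal : ∀ c, ∀ a ∈ Ac c, ∀ b ∈ Ac c, a ≠ b → succ c a b ∨ succ c b a) :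
    ∀ (k : ℕ) (x : {x // x ∈ stateSpace Ac m}),
      (univ.filter (fun a => (∃ c, a ∈ Ac c) ∧ busy Ac x.1 a < m a)).card ≤ k →
      ∃ y : {x // x ∈ stateSpace Ac m},
        Relation.ReflTransGen (Stp Ac lam succ mu m) x y ∧
        (∀ a c, x.1 a c ≤ y.1 a c) ∧ ∀ c, ∀ a ∈ Ac c, busy Ac y.1 a = m a := by
  intro k
  induction k with
  | zero =>
    intro x hcard
    refine ⟨x, Relation.ReflTransGen.refl, fun _ _ => le_refl _, ?_⟩
    intro c a hac
    by_contra hz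
    have hlt : busy Ac x.1 a < m a :=
      lt_of_le_of_ne ((mem_stateSpace_iff.1 x.2).2 a) hz
    have hmem : a ∈ univ.filter (fun a => (∃ c, a ∈ Ac c) ∧ busy Ac x.1 a < m a) :=
      Finset.mem_filter.2 ⟨mem_univ a, ⟨c, hac⟩, hlt⟩
    have := Finset.card_pos.2 ⟨a, hmem⟩
    omega
  | succ k ih =>
    intro x hcard
    by_cases hB : (univ.filter (fun a => (∃ c, a ∈ Ac c) ∧ busy Ac x.1 a < m a)).Nonempty
    · obtain ⟨a₀, ha₀⟩ := hB
      obtain ⟨-, ⟨c₀, hc₀⟩, hlt₀⟩ := Finset.mem_filter.1 ha₀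
      have hTne : ((Ac c₀).filter (fun a => busy Ac x.1 a < m a)).Nonempty :=
        ⟨a₀, Finset.mem_filter.2 ⟨hc₀, hlt₀⟩⟩
      obtain ⟨amax, hamaxT, hmax⟩ := exists_max (r := succ c₀)
        ((Ac c₀).filter (fun a => busy Ac x.1 a < m a)).card
        ((Ac c₀).filter (fun a => busy Ac x.1 a < m a)) (le_refl _) hTne
        (fun a ha => hirr c₀ a (Finset.mem_filter.1 ha).1)
        (fun a₁ h₁ a₂ h₂ a₃ h₃ => htrans c₀ a₁ (Finset.mem_filter.1 h₁).1
          a₂ (Finset.mem_filter.1 h₂).1 a₃ (Finset.mem_filter.1 h₃).1)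
      have hamaxAc : amax ∈ Ac c₀ := (Finset.mem_filter.1 hamaxT).1
      have hpref3 : ∀ a' ∈ Ac c₀, busy Ac x.1 a' < m a' → a' ≠ amax → succ c₀ amax a' := by
        intro a' ha' hba' hne
        have hT' : a' ∈ (Ac c₀).filter (fun a => busy Ac x.1 a < m a) :=
          Finset.mem_filter.2 ⟨ha', hba'⟩
        rcases htotal c₀ amax hamaxAc a' ha' (Ne.symm hne) with h | h
        · exact h
        · exact absurd h (hmax a' hT')
      obtain ⟨y₁, hreach₁, hmono₁, hfull₁⟩ :=
        fill_direct hlam hmu (m amax) x c₀ amax hamaxAc hpref3 (Nat.sub_le _ _)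
      have hamaxmem : amax ∈ univ.filter (fun a => (∃ c, a ∈ Ac c) ∧ busy Ac x.1 a < m a) :=
        Finset.mem_filter.2 ⟨mem_univ amax, ⟨c₀, hamaxAc⟩, (Finset.mem_filter.1 hamaxT).2⟩
      have hcard' :
          (univ.filter (fun a => (∃ c, a ∈ Ac c) ∧ busy Ac y₁.1 a < m a)).card ≤ k := by
        have hsub : univ.filter (fun a => (∃ c, a ∈ Ac c) ∧ busy Ac y₁.1 a < m a) ⊆
            (univ.filter (fun a => (∃ c, a ∈ Ac c) ∧ busy Ac x.1 a < m a)).erase amax := by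
          intro b hb
          obtain ⟨-, hex, hblt⟩ := Finset.mem_filter.1 hb
          refine Finset.mem_erase.2 ⟨?_, Finset.mem_filter.2 ⟨mem_univ b, hex,
            lt_of_le_of_lt (busy_mono hmono₁ b) hblt⟩⟩
          intro hbe
          rw [hbe, hfull₁] at hblt
          exact lt_irrefl _ hblt
        have h1 := Finset.card_le_card hsub
        rw [Finset.card_erase_of_mem hamaxmem] at h1
        have h3 := Finset.card_pos.2 ⟨amax, hamaxmem⟩
        omega
      obtain ⟨y, hreach, hmono, hfull⟩ := ih y₁ hcard'
      exact ⟨y, hreach₁.trans hreach,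
        fun a c => le_trans (hmono₁ a c) (hmono a c), hfull⟩
    · refine ⟨x, Relation.ReflTransGen.refl, fun _ _ => le_refl _, ?_⟩
      intro c a hac
      by_contra hz
      have hlt : busy Ac x.1 a < m a :=
        lt_of_le_of_ne ((mem_stateSpace_iff.1 x.2).2 a) hz
      exact hB ⟨a, Finset.mem_filter.2 ⟨mem_univ a, ⟨c, hac⟩, hlt⟩⟩

lemma reach_up (hlam : ∀ c, 0 < lam c) (hmu : ∀ a c, a ∈ Ac c → 0 < mu a c)
    (hirr : ∀ c, ∀ a ∈ Ac c, ¬ succ c a a)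
    (htrans : ∀ c, ∀ a ∈ Ac c, ∀ b ∈ Ac c, ∀ d ∈ Ac c,
      succ c a b → succ c b d → succ c a d)
    (htotal : ∀ c, ∀ a ∈ Ac c, ∀ b ∈ Ac c, a ≠ b → succ c a b ∨ succ c b a) :
    ∀ (k : ℕ) (x : {x // x ∈ stateSpace Ac m}),
      (∑ a : A, ∑ c : C, x.1 a c) ≤ k →
      Relation.ReflTransGen (Stp Ac lam succ mu m)
        ⟨fun _ _ => 0, zero_mem⟩ x := by
  intro k
  induction k with
  | zero =>
    intro x htot
    have hx0 : ∀ a c, x.1 a c = 0 := by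
      intro a c
      have h0 : (∑ a : A, ∑ c : C, x.1 a c) = 0 := Nat.le_zero.1 htot
      have h1 := Finset.sum_eq_zero_iff.1 h0 a (mem_univ a)
      exact Finset.sum_eq_zero_iff.1 h1 c (mem_univ c)
    have : (⟨fun _ _ => 0, zero_mem⟩ : {x // x ∈ stateSpace Ac m}) = x :=
      Subtype.ext (funext fun a => funext fun c => (hx0 a c).symm)
    rw [this]
  | succ k ih =>
    intro x htot
    by_cases h0 : ∀ a c, x.1 a c = 0
    · have : (⟨fun _ _ => 0, zero_mem⟩ : {x // x ∈ stateSpace Ac m}) = x :=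
        Subtype.ext (funext fun a => funext fun c => (h0 a c).symm)
      rw [this]
    · push_neg at h0
      obtain ⟨a, c, hne⟩ := h0
      have hpos : 0 < x.1 a c := Nat.pos_of_ne_zero hne
      have hac : a ∈ Ac c := by
        by_contra hnot
        have := (mem_stateSpace_iff.1 x.2).1 a c hnot
        omega
      set y : {x // x ∈ stateSpace Ac m} := ⟨decr x.1 a c, decr_mem x.2⟩ with hydef
      have htoty : (∑ a' : A, ∑ c' : C, y.1 a' c') ≤ k := by
        have h := total_decr (x := x.1) (a := a) (c := c) hpos
        have hy : ∀ a' c', y.1 a' c' = decr x.1 a c a' c' := fun _ _ => rfl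
        calc (∑ a' : A, ∑ c' : C, y.1 a' c')
            = ∑ a' : A, ∑ c' : C, decr x.1 a c a' c' := by
              exact Finset.sum_congr rfl fun a' _ =>
                Finset.sum_congr rfl fun c' _ => hy a' c'
          _ ≤ k := by omega
      have hyreach := ih y htoty
      obtain ⟨y₁, hr1, hm1, hf1⟩ := saturate hlam hmu hirr htrans htotal
        ((univ.filter (fun a => (∃ c, a ∈ Ac c) ∧ busy Ac y.1 a < m a)).card)
        y (le_refl _)
      have hzmem : (fun a'' c'' => if a'' = a then y.1 a'' c'' else y₁.1 a'' c'')
          ∈ stateSpace Ac m := by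
        apply mem_of_le y₁.2
        intro a'' c''
        by_cases h : a'' = a
        · rw [if_pos h]; exact hm1 a'' c''
        · rw [if_neg h]
      set z : {x // x ∈ stateSpace Ac m} := ⟨_, hzmem⟩ with hzdef
      have hreach_z : Relation.ReflTransGen (Stp Ac lam succ mu m) y₁ z := by
        apply reach_down hlam hmu (∑ a' : A, ∑ c' : C, y₁.1 a' c') y₁ z (le_refl _)
        intro a'' c''
        show (if a'' = a then y.1 a'' c'' else y₁.1 a'' c'') ≤ y₁.1 a'' c''
        by_cases h : a'' = a
        · rw [if_pos h]; exact hm1 a'' c''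
        · rw [if_neg h]
      have hbz : busy Ac z.1 a = busy Ac y.1 a :=
        busy_congr_row (fun c' => if_pos rfl)
      have hby : busy Ac y.1 a + 1 = busy Ac x.1 a := busy_decr_self hac hpos
      have hbx := (mem_stateSpace_iff.1 x.2).2 a
      have hblt : busy Ac z.1 a < m a := by omega
      have hpref : IsPreferred Ac succ m z.1 c a := by
        refine ⟨hac, hblt, ?_⟩
        intro a' ha' hba' hne'
        exfalso
        have hrow : busy Ac z.1 a' = busy Ac y₁.1 a' :=
          busy_congr_row (fun c' => if_neg hne')
        rw [hrow, hf1 c a' ha'] at hba'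
        exact lt_irrefl _ hba'
      have hstep := stp_incr hlam hmu hpref (x := z)
      have hwx : ∀ a' c', x.1 a' c' ≤ incr z.1 a c a' c' := by
        intro a' c'
        by_cases h : a' = a ∧ c' = c
        · rw [h.1, h.2, show incr z.1 a c a c = z.1 a c + 1 from by simp [incr]]
          have hz1 : z.1 a c = y.1 a c := if_pos rfl
          have hy1 : y.1 a c = x.1 a c - 1 := by
            show decr x.1 a c a c = x.1 a c - 1
            simp [decr]
          omega
        · rw [show incr z.1 a c a' c' = z.1 a' c' from by simp [incr, h]]
          by_cases ha' : a' = a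
          · subst ha'
            have hc' : c' ≠ c := fun hc' => h ⟨rfl, hc'⟩
            have hz1 : z.1 a' c' = y.1 a' c' := if_pos rfl
            have hy1 : y.1 a' c' = x.1 a' c' := by simp [hydef, decr, hc']
            omega
          · have hz1 : z.1 a' c' = y₁.1 a' c' := if_neg ha'
            have hy1 : y.1 a' c' = x.1 a' c' := by simp [hydef, decr, ha']
            have hm := hm1 a' c'
            omega
      have hlast : Relation.ReflTransGen (Stp Ac lam succ mu m)
          ⟨incr z.1 a c, incr_mem z.2 hac hblt⟩ x :=
        reach_down hlam hmu (∑ a' : A, ∑ c' : C, incr z.1 a c a' c')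
          ⟨incr z.1 a c, incr_mem z.2 hac hblt⟩ x (le_refl _) hwx
      exact (((hyreach.trans hr1).trans hreach_z).tail hstep).trans hlast

lemma connected (hlam : ∀ c, 0 < lam c) (hmu : ∀ a c, a ∈ Ac c → 0 < mu a c)
    (hirr : ∀ c, ∀ a ∈ Ac c, ¬ succ c a a)
    (htrans : ∀ c, ∀ a ∈ Ac c, ∀ b ∈ Ac c, ∀ d ∈ Ac c,
      succ c a b → succ c b d → succ c a d)
    (htotal : ∀ c, ∀ a ∈ Ac c, ∀ b ∈ Ac c, a ≠ b → succ c a b ∨ succ c b a)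
    (x y : {x // x ∈ stateSpace Ac m}) :
    Relation.ReflTransGen (Stp Ac lam succ mu m) x y :=
  (reach_down hlam hmu (∑ a : A, ∑ c : C, x.1 a c) x ⟨fun _ _ => 0, zero_mem⟩
    (le_refl _) (fun _ _ => Nat.zero_le _)).trans
    (reach_up hlam hmu hirr htrans htotal (∑ a : A, ∑ c : C, y.1 a c) y (le_refl _))

/-- The ambulance-station continuous-time Markov chain with supply
vector `m` has a unique stationary distribution: the balance equations
`∑_{x ∈ S(m)} ν_x q^m_{x,x'} = 0` for all `x' ∈ S(m)`, together with the normalization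
`∑_{x ∈ S(m)} ν_x = 1`, have exactly one solution, and this solution is everywhere
positive. -/
theorem stmt3
    (Ac : C → Finset A) (lam : C → ℝ) (succ : C → A → A → Prop)
    (mu : A → C → ℝ) (m : A → ℕ)
    (hAc : ∀ c, (Ac c).Nonempty)
    (hlam : ∀ c, 0 < lam c)
    (hmu : ∀ a c, a ∈ Ac c → 0 < mu a c)
    (hirr : ∀ c, ∀ a ∈ Ac c, ¬ succ c a a)
    (htrans : ∀ c, ∀ a ∈ Ac c, ∀ b ∈ Ac c, ∀ d ∈ Ac c,
      succ c a b → succ c b d → succ c a d)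
    (htotal : ∀ c, ∀ a ∈ Ac c, ∀ b ∈ Ac c, a ≠ b → succ c a b ∨ succ c b a) :
    ∃ ν : {x // x ∈ stateSpace Ac m} → ℝ,
      ((∀ x' : {x // x ∈ stateSpace Ac m},
          ∑ x : {x // x ∈ stateSpace Ac m},
            ν x * qrate Ac lam succ mu m x.1 x'.1 = 0) ∧
        ∑ x : {x // x ∈ stateSpace Ac m}, ν x = 1) ∧
      (∀ x : {x // x ∈ stateSpace Ac m}, 0 < ν x) ∧
      ∀ ν' : {x // x ∈ stateSpace Ac m} → ℝ,
        ((∀ x' : {x // x ∈ stateSpace Ac m},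
            ∑ x : {x // x ∈ stateSpace Ac m},
              ν' x * qrate Ac lam succ mu m x.1 x'.1 = 0) ∧
          ∑ x : {x // x ∈ stateSpace Ac m}, ν' x = 1) → ν' = ν := by
  classical
  haveI : Nonempty {x // x ∈ stateSpace Ac m} :=
    ⟨⟨fun _ _ => 0, zero_mem⟩⟩
  obtain ⟨ν, ⟨hker, hsum⟩, hpos, huniq⟩ :=
    ctmc_stationary (n := {x // x ∈ stateSpace Ac m})
      (fun x y => qrate Ac lam succ mu m x.1 y.1)
      (fun x y hxy => by
        have hne : (y.1 : A → C → ℕ) ≠ x.1 := fun h => hxy (Subtype.ext h).symm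
        rw [qrate_off hne]
        exact offRate_nonneg hlam hmu _ _)
      (fun x => by
        rw [Finset.sum_coe_sort (stateSpace Ac m)
          (fun y => qrate Ac lam succ mu m x.1 y)]
        rw [← Finset.add_sum_erase _ _ x.2]
        have h1 : ∑ y ∈ (stateSpace Ac m).erase x.1, qrate Ac lam succ mu m x.1 y
            = ∑ y ∈ (stateSpace Ac m).erase x.1, offRate Ac lam succ mu m x.1 y :=
          Finset.sum_congr rfl fun y hy => qrate_off (Finset.ne_of_mem_erase hy)
        rw [h1, show qrate Ac lam succ mu m x.1 x.1 =
            -(∑ y ∈ (stateSpace Ac m).erase x.1, offRate Ac lam succ mu m x.1 y)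
          from if_pos rfl]
        ring)
      (fun x y => connected hlam hmu hirr htrans htotal x y)
  exact ⟨ν, ⟨hker, hsum⟩, hpos, huniq⟩

end Ambulance
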